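/- Suppose f: R^n → R is bounded with |f| ≤ 1 and t ↦ P_t f is a C¹ family of functions satisfying ‖∂_t P_t f‖_∞ ≤ t^{α-1} for all t > 0 and P_t f → f pointwise a.e. as t → 0, where 0 < α < 1. Suppose moreover |∇_x P_t f(x)| ≤ C t^{α-1} for all x, t. Then, after correction on a null set, |f(x)-f(y)| ≤ C'·|x-y|^α for all x, y ∈ R^n, with C' depending only on C and α. -/

import Mathlib

open Real MeasureTheory Filter

/-- Abstract version of the first half of the proof of Theorem 1.1. -/
theorem stmt_11 (n : ℕ) (hn : 1 ≤ n) (α : ℝ) (hα0 : 0 < α) (hα1 : α < 1)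
    (C : ℝ) (hC : 0 < C) :
    ∃ C' > 0, ∀ (f : EuclideanSpace ℝ (Fin n) → ℝ)
      (P P' : ℝ → EuclideanSpace ℝ (Fin n) → ℝ),
      (∀ x, |f x| ≤ 1) →
      -- C¹ family in t, with derivative P' bounded by t^(α-1)
      (∀ t : ℝ, 0 < t → ∀ x, HasDerivAt (fun s => P s x) (P' t x) t) →
      (∀ t : ℝ, 0 < t → ∀ x, |P' t x| ≤ t ^ (α - 1)) →
      -- pointwise a.e. convergence P_t f → f as t → 0⁺
      (∀ᵐ x : EuclideanSpace ℝ (Fin n),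
        Tendsto (fun t => P t x) (nhdsWithin 0 (Set.Ioi 0)) (nhds (f x))) →
      -- gradient bound in x
      (∀ t : ℝ, 0 < t → ∀ x, DifferentiableAt ℝ (P t) x ∧
        ‖fderiv ℝ (P t) x‖ ≤ C * t ^ (α - 1)) →
      ∃ g : EuclideanSpace ℝ (Fin n) → ℝ,
        g =ᵐ[volume] f ∧ ∀ x y, |g x - g y| ≤ C' * ‖x - y‖ ^ α := by
  refine ⟨2 / α + C, by positivity, fun f P P' hf hP hP' hae hgrad => ?_⟩
  -- Key time estimate: for 0 < s ≤ t, |P t x - P s x| ≤ (t^α - s^α)/α ≤ t^α/α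
  have key : ∀ x, ∀ s t : ℝ, 0 < s → s ≤ t → |P t x - P s x| ≤ t ^ α / α := by
    intro x s t hs hst
    have hmain : ∀ u ∈ Set.Icc s t, ‖P u x - P s x‖ ≤ (u ^ α - s ^ α) / α := by
      apply image_norm_le_of_norm_deriv_right_le_deriv_boundary'
        (f := fun u => P u x - P s x) (f' := fun u => P' u x)
        (B := fun u => (u ^ α - s ^ α) / α) (B' := fun u => u ^ (α - 1))
      · intro u hu
        exact ((hP u (hs.trans_le hu.1) x).sub_const _).continuousAt.continuousWithinAt
      · intro u hu
        exact ((hP u (hs.trans_le hu.1) x).sub_const _).hasDerivWithinAt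
      · simp
      · intro u hu
        have hu0 : u ≠ 0 := (hs.trans_le hu.1).ne'
        exact (((Real.hasDerivAt_rpow_const (Or.inl hu0)).sub_const _).div_const
          α).continuousAt.continuousWithinAt
      · intro u hu
        have hu0 : u ≠ 0 := (hs.trans_le hu.1).ne'
        have := (((Real.hasDerivAt_rpow_const (p := α)
          (Or.inl hu0)).sub_const (s ^ α)).div_const α).hasDerivWithinAt (s := Set.Ici u)
        rw [mul_div_cancel_left₀ _ hα0.ne'] at this
        exact this
      · intro u hu
        rw [Real.norm_eq_abs]
        exact hP' u (hs.trans_le hu.1) x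
    have h1 := hmain t ⟨hst, le_rfl⟩
    rw [Real.norm_eq_abs] at h1
    refine h1.trans ?_
    have hsa : (0:ℝ) ≤ s ^ α := Real.rpow_nonneg hs.le α
    gcongr
    linarith
  -- Existence of the limit as t → 0⁺, for every x
  have hlim : ∀ x, ∃ L, Tendsto (fun t => P t x) (nhdsWithin 0 (Set.Ioi 0)) (nhds L) := by
    intro x
    rw [← cauchy_map_iff_exists_tendsto]
    rw [Metric.cauchy_iff]
    refine ⟨map_neBot, fun ε hε => ?_⟩
    -- find δ > 0 with 2 * δ^α/α < ε
    have htend : Tendsto (fun δ : ℝ => 2 * (δ ^ α / α)) (nhdsWithin 0 (Set.Ioi 0)) (nhds 0) := by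
      have h1 : Tendsto (fun δ : ℝ => δ ^ α) (nhds 0) (nhds 0) := by
        have := (Real.continuousAt_rpow_const 0 α (Or.inr hα0.le))
        simpa [Real.zero_rpow hα0.ne'] using this.tendsto
      have h1' : Tendsto (fun δ : ℝ => δ ^ α) (nhdsWithin 0 (Set.Ioi 0)) (nhds 0) :=
        h1.mono_left nhdsWithin_le_nhds
      simpa using (h1'.div_const α).const_mul 2
    obtain ⟨δ, hδε, hδ0⟩ := ((htend.eventually (gt_mem_nhds hε)).and
      self_mem_nhdsWithin).exists
    refine ⟨(fun t => P t x) '' Set.Ioo 0 δ,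
      image_mem_map (Ioo_mem_nhdsGT_of_mem ⟨le_rfl, hδ0⟩), ?_⟩
    rintro _ ⟨a, ha, rfl⟩ _ ⟨b, hb, rfl⟩
    have hbound : ∀ a b : ℝ, a ∈ Set.Ioo 0 δ → b ∈ Set.Ioo 0 δ → a ≤ b →
        dist (P a x) (P b x) < ε := by
      intro a b ha hb hab
      rw [Real.dist_eq, abs_sub_comm]
      calc |P b x - P a x| ≤ b ^ α / α := key x a b ha.1 hab
        _ ≤ δ ^ α / α := by
            have : b ^ α ≤ δ ^ α := Real.rpow_le_rpow hb.1.le hb.2.le hα0.le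
            gcongr
        _ < ε := by linarith [Real.rpow_nonneg hδ0.le α]
    rcases le_total a b with hab | hab
    · exact hbound a b ha hb hab
    · rw [dist_comm]; exact hbound b a hb ha hab
  choose g hg using hlim
  refine ⟨g, ?_, ?_⟩
  · filter_upwards [hae] with x hx
    exact tendsto_nhds_unique (hg x) hx
  · -- distance from g to P t: |g x - P t x| ≤ t^α/α
    have hclose : ∀ x, ∀ t : ℝ, 0 < t → |g x - P t x| ≤ t ^ α / α := by
      intro x t ht
      have h1 : Tendsto (fun s => |P t x - P s x|) (nhdsWithin 0 (Set.Ioi 0))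
          (nhds |P t x - g x|) := (((hg x).const_sub _).abs)
      rw [abs_sub_comm]
      refine le_of_tendsto h1 ?_
      filter_upwards [Ioo_mem_nhdsGT_of_mem ⟨le_rfl, ht⟩] with s hs
      exact key x s t hs.1 hs.2.le
    intro x y
    rcases eq_or_ne x y with rfl | hxy
    · simp [Real.rpow_nonneg]
      positivity
    have ht : (0:ℝ) < ‖x - y‖ := by
      rw [norm_pos_iff]; exact sub_ne_zero_of_ne hxy
    set t := ‖x - y‖ with htdef
    -- spatial estimate
    have hspace : |P t x - P t y| ≤ C * t ^ α := by
      have := convex_univ.norm_image_sub_le_of_norm_fderiv_le (f := P t)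
        (fun z (_ : z ∈ Set.univ) => (hgrad t ht z).1) (fun z _ => (hgrad t ht z).2)
        (Set.mem_univ y) (Set.mem_univ x)
      rw [Real.norm_eq_abs] at this
      refine this.trans ?_
      have h2 : t ^ (α - 1) * t = t ^ α := by
        rw [← Real.rpow_add_one ht.ne']; norm_num
      rw [mul_assoc, h2]
    calc |g x - g y| = |(g x - P t x) + (P t x - P t y) + (P t y - g y)| := by ring_nf
      _ ≤ |g x - P t x| + |P t x - P t y| + |P t y - g y| := by
          exact (abs_add_le _ _).trans (by gcongr; exact abs_add_le _ _)
      _ ≤ t ^ α / α + C * t ^ α + t ^ α / α :=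
          add_le_add (add_le_add (hclose x t ht) hspace)
            (by rw [abs_sub_comm]; exact hclose y t ht)
      _ = (2 / α + C) * t ^ α := by ring
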